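/- Let p be a prime, R a commutative ring of characteristic p, M an R-module, and C : M → M an additive map satisfying C(r^p • m) = r • C(m) for all r ∈ R and m ∈ M (a Cartier module structure on M). Let 𝔞 ⊆ R be a finitely generated ideal and let m ∈ M satisfy 𝔞^n • m = 0 for some natural number n. Then there exists a natural number e such that for all r ∈ R and all a ∈ 𝔞 one has a • C^e(r • m) = 0, where C^e denotes the e-fold iterate of C. -/

import Mathlib

/-- If `C` is a Cartier structure on the `R`-module `M` (i.e. `C` is additive and
`C (r^p • m) = r • C m`), `𝔞` is a finitely generated ideal and `𝔞^n • m = 0`, then some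
iterate `C^e` kills `a • C^[e] (r • m)` for all `r ∈ R` and `a ∈ 𝔞`; i.e. the inclusion
`M[𝔞] ⊆ Γ_𝔞 M` is a nil-isomorphism of Cartier modules. -/
theorem exists_iterate_smul_mem_annihilated
    {p : ℕ} (hp : p.Prime) {R : Type*} [CommRing R] [CharP R p]
    {M : Type*} [AddCommGroup M] [Module R M]
    (C : M → M) (hadd : ∀ x y : M, C (x + y) = C x + C y)
    (hC : ∀ (r : R) (m : M), C (r ^ p • m) = r • C m)
    (𝔞 : Ideal R) (hfg : 𝔞.FG) (m : M) (n : ℕ)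
    (hm : ∀ a ∈ 𝔞 ^ n, a • m = 0) :
    ∃ e : ℕ, ∀ r : R, ∀ a ∈ 𝔞, a • C^[e] (r • m) = 0 := by
  have hC0 : C 0 = 0 := by
    have h := hadd 0 0
    rw [add_zero] at h
    exact add_eq_left.mp h.symm
  have key : ∀ (e : ℕ) (a : R) (x : M), C^[e] (a ^ (p ^ e) • x) = a • C^[e] x := by
    intro e
    induction e with
    | zero => intro a x; simp
    | succ e ih =>
      intro a x
      rw [Function.iterate_succ_apply, Function.iterate_succ_apply]
      have h1 : a ^ p ^ (e + 1) = (a ^ p ^ e) ^ p := by rw [← pow_mul, pow_succ]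
      rw [h1, hC (a ^ p ^ e) x, ih a (C x)]
  refine ⟨n, fun r a ha => ?_⟩
  rw [← key n a (r • m)]
  have hle : n ≤ p ^ n := Nat.le_of_lt (Nat.lt_pow_self hp.one_lt)
  have hmem : a ^ p ^ n * r ∈ 𝔞 ^ n := by
    apply Ideal.mul_mem_right
    exact Ideal.pow_le_pow_right hle (Ideal.pow_mem_pow ha (p ^ n))
  rw [smul_smul, hm _ hmem, Function.iterate_fixed hC0 n]
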